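/- For n > 1, the b-chromatic number of the total graph of the star S_n equals n + 1. -/

import Mathlib

open SimpleGraph

/-- The star graph with a central vertex `0` and `n` leaves. -/
def starGraph (n : ℕ) : SimpleGraph (Fin (n+1)) where
  Adj u v := u ≠ v ∧ (u = 0 ∨ v = 0)
  symm := by
    refine ⟨?_⟩
    intro u v h
    exact ⟨h.1.symm, h.2.symm⟩
  loopless := by
    refine ⟨?_⟩
    intro u h
    exact h.1 rfl

/-- A proper coloring with `k` colors which is a b-coloring: every color class
contains a vertex adjacent to at least one vertex of every other color class. -/
def IsBColoring {V : Type*} (G : SimpleGraph V) (k : ℕ) (c : V → Fin k) : Prop :=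
  (∀ u v, G.Adj u v → c u ≠ c v) ∧
    ∀ i : Fin k, ∃ v, c v = i ∧ ∀ j : Fin k, j ≠ i → ∃ u, G.Adj v u ∧ c u = j

/-- `G` admits a b-coloring with `k` colors. -/
def HasBColoring {V : Type*} (G : SimpleGraph V) (k : ℕ) : Prop :=
  ∃ c : V → Fin k, IsBColoring G k c

/-- The set of `k` such that `G` has a b-coloring with `k` colors.  The
b-chromatic number of `G` is the greatest element of this set. -/
def bChromaticSet {V : Type*} (G : SimpleGraph V) : Set ℕ :=
  {k | HasBColoring G k}

/-- The set of `i` such that `G` has at least `i` vertices of degree at least `i - 1`.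
The m-degree of `G` is the greatest element of this set. -/
def mDegreeSet {V : Type*} (G : SimpleGraph V) : Set ℕ :=
  {i | ∃ S : Set V, S.Finite ∧ S.ncard = i ∧ ∀ v ∈ S, i - 1 ≤ (G.neighborSet v).ncard}

/-- The line graph of `G`: vertices are the edges of `G`, two being adjacent iff
they are distinct and share an endpoint. -/
def lineGraph {V : Type*} (G : SimpleGraph V) : SimpleGraph G.edgeSet where
  Adj e f := e ≠ f ∧ ∃ v, v ∈ (e : Sym2 V) ∧ v ∈ (f : Sym2 V)
  symm := by
    refine ⟨?_⟩
    rintro e f ⟨hne, v, hv1, hv2⟩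
    exact ⟨hne.symm, v, hv2, hv1⟩
  loopless := by
    refine ⟨?_⟩
    rintro e ⟨hne, -⟩
    exact hne rfl

/-- The total graph of `G`: vertices are `V(G) ⊕ E(G)`; adjacency is vertex
adjacency, vertex-edge incidence, or edge adjacency. -/
def totalGraph {V : Type*} (G : SimpleGraph V) : SimpleGraph (V ⊕ G.edgeSet) where
  Adj x y :=
    match x, y with
    | .inl u, .inl v => G.Adj u v
    | .inl u, .inr e => u ∈ (e : Sym2 V)
    | .inr e, .inl u => u ∈ (e : Sym2 V)
    | .inr e, .inr f => e ≠ f ∧ ∃ v, v ∈ (e : Sym2 V) ∧ v ∈ (f : Sym2 V)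
  symm := by
    refine ⟨?_⟩
    rintro (u | e) (v | f) h
    · exact h.symm
    · exact h
    · exact h
    · exact ⟨h.1.symm, h.2.choose, h.2.choose_spec.2, h.2.choose_spec.1⟩
  loopless := by
    refine ⟨?_⟩
    rintro (u | e) h
    · exact G.loopless.irrefl u h
    · exact h.1 rfl

/-- The `p`-th power of `G`: same vertices, `u ~ v` iff `0 < d(u,v) ≤ p`. -/
def graphPower {V : Type*} (G : SimpleGraph V) (p : ℕ) : SimpleGraph V where
  Adj u v := 0 < G.dist u v ∧ G.dist u v ≤ p
  symm := by
    refine ⟨?_⟩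
    intro u v h
    rwa [SimpleGraph.dist_comm]
  loopless := by
    refine ⟨?_⟩
    intro u h
    simp [SimpleGraph.dist_self] at h

namespace StarTotalAux

variable {n : ℕ}

/-- sum of the two endpoints; for a star edge `s(0,b)` this is `b`. -/
def osum : Sym2 (Fin (n+1)) → Fin (n+1) :=
  Sym2.lift ⟨fun x y => x + y, fun x y => add_comm x y⟩

lemma osum_mk (a b : Fin (n+1)) : osum s(a,b) = a + b := rfl

lemma star_adj {u v : Fin (n+1)} :
    (_root_.starGraph n).Adj u v ↔ u ≠ v ∧ (u = 0 ∨ v = 0) := Iff.rfl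

lemma edge_rep {e : Sym2 (Fin (n+1))} (he : e ∈ (_root_.starGraph n).edgeSet) :
    osum e ≠ 0 ∧ e = s(0, osum e) := by
  induction e using Sym2.ind with
  | _ u v =>
    rw [SimpleGraph.mem_edgeSet, star_adj] at he
    obtain ⟨hne, h0⟩ := he
    rcases h0 with rfl | rfl
    · rw [osum_mk, zero_add]
      exact ⟨fun h => hne h.symm, rfl⟩
    · rw [osum_mk, add_zero]
      exact ⟨hne, Sym2.eq_swap⟩

lemma mem_starEdge {b : Fin (n+1)} (hb : b ≠ 0) : s(0,b) ∈ (_root_.starGraph n).edgeSet := by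
  rw [SimpleGraph.mem_edgeSet, star_adj]
  exact ⟨fun h => hb h.symm, Or.inl rfl⟩

/-- the edge `s(0,b)` of the star as an element of the edge set. -/
def edg (b : Fin (n+1)) (hb : b ≠ 0) : (_root_.starGraph n).edgeSet := ⟨s(0,b), mem_starEdge hb⟩

lemma osum_edg (b : Fin (n+1)) (hb : b ≠ 0) : osum ((edg b hb : (_root_.starGraph n).edgeSet) : Sym2 (Fin (n+1))) = b := by
  show osum s(0,b) = b
  rw [osum_mk, zero_add]

lemma edge_inj {e f : (_root_.starGraph n).edgeSet}
    (h : osum (e : Sym2 (Fin (n+1))) = osum (f : Sym2 (Fin (n+1)))) : e = f := by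
  have he := (edge_rep e.2).2
  have hf := (edge_rep f.2).2
  apply Subtype.ext
  rw [he, hf, h]


/-- The b-coloring of the total graph of the star with `n+1` colors. -/
def bcol (n : ℕ) : Fin (n+1) ⊕ (_root_.starGraph n).edgeSet → Fin (n+1)
  | Sum.inl a => if a = 0 then (0 : Fin (n+1)) else if a = 1 then 2 else 1
  | Sum.inr e => osum e.1

lemma bcol_inl (a : Fin (n+1)) :
    bcol n (Sum.inl a) = if a = 0 then (0 : Fin (n+1)) else if a = 1 then 2 else 1 := rfl

lemma bcol_inr (e : (_root_.starGraph n).edgeSet) : bcol n (Sum.inr e) = osum e.1 := rfl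

end StarTotalAux

open StarTotalAux

theorem totalGraph_star_bChromatic (n : ℕ) (hn : 1 < n) :
    IsGreatest (bChromaticSet (totalGraph (_root_.starGraph n))) (n + 1) := by
  classical
  -- numeral facts
  have h2 : ((2 : Fin (n+1)) : ℕ) = 2 % (n+1) := rfl
  have h1 : ((1 : Fin (n+1)) : ℕ) = 1 % (n+1) := rfl
  have h0 : ((0 : Fin (n+1)) : ℕ) = 0 := rfl
  have e2 : 2 % (n+1) = 2 := Nat.mod_eq_of_lt (by omega)
  have e1 : 1 % (n+1) = 1 := Nat.mod_eq_of_lt (by omega)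
  have h21 : (2 : Fin (n+1)) ≠ 1 := by
    intro h; have := congrArg Fin.val h; simp only [h2, h1, e2, e1] at this; omega
  have h20 : (2 : Fin (n+1)) ≠ 0 := by
    intro h; have := congrArg Fin.val h; simp only [h2, h0, e2] at this; omega
  have h10 : (1 : Fin (n+1)) ≠ 0 := by
    intro h; have := congrArg Fin.val h; simp only [h1, h0, e1] at this; omega
  constructor
  · -- membership : a b-coloring with n+1 colors
    refine ⟨bcol n, ?_, ?_⟩
    · -- properness
      rintro (a | e) (b | f) hadj heq
      · obtain ⟨hne, hor⟩ := (star_adj).mp hadj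
        rw [bcol_inl, bcol_inl] at heq
        rcases hor with rfl | rfl
        · rw [if_pos rfl, if_neg (fun h : b = 0 => hne h.symm)] at heq
          split at heq
          · exact h20 heq.symm
          · exact h10 heq.symm
        · rw [if_pos rfl, if_neg hne] at heq
          split at heq
          · exact h20 heq
          · exact h10 heq
      · have hmem : a ∈ (f : (_root_.starGraph n).edgeSet).1 := hadj
        obtain ⟨hos, hrep⟩ := edge_rep f.2
        rw [hrep, Sym2.mem_iff] at hmem
        rw [bcol_inl, bcol_inr] at heq
        rcases hmem with rfl | rfl
        · rw [if_pos rfl] at heq; exact hos heq.symm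
        · rw [if_neg hos] at heq
          split at heq
          next h => rw [h] at heq; first | exact h21 heq | exact h21 heq.symm
          next h => first | exact h heq | exact h heq.symm
      · have hmem : b ∈ (e : (_root_.starGraph n).edgeSet).1 := hadj
        obtain ⟨hos, hrep⟩ := edge_rep e.2
        rw [hrep, Sym2.mem_iff] at hmem
        rw [bcol_inl, bcol_inr] at heq
        rcases hmem with rfl | rfl
        · rw [if_pos rfl] at heq; exact hos heq
        · rw [if_neg hos] at heq
          split at heq
          next h => rw [h] at heq; first | exact h21 heq | exact h21 heq.symm
          next h => first | exact h heq | exact h heq.symm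
      · exact hadj.1 (edge_inj heq)
    · -- dominance
      intro i
      by_cases hi : i = 0
      · subst hi
        refine ⟨Sum.inl 0, by rw [bcol_inl, if_pos rfl], ?_⟩
        intro j hj
        refine ⟨Sum.inr (edg j hj), ?_, ?_⟩
        · show (0 : Fin (n+1)) ∈ s(0, j)
          exact Sym2.mem_mk_left 0 j
        · rw [bcol_inr]; exact osum_edg j hj
      · refine ⟨Sum.inr (edg i hi), by rw [bcol_inr]; exact osum_edg i hi, ?_⟩
        intro j hj
        by_cases hj0 : j = 0
        · subst hj0
          refine ⟨Sum.inl 0, ?_, by rw [bcol_inl, if_pos rfl]⟩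
          show (0 : Fin (n+1)) ∈ s(0, i)
          exact Sym2.mem_mk_left 0 i
        · refine ⟨Sum.inr (edg j hj0), ?_, by rw [bcol_inr]; exact osum_edg j hj0⟩
          show (edg i hi : (_root_.starGraph n).edgeSet) ≠ edg j hj0 ∧ _
          constructor
          · intro h
            apply hj
            have := congrArg (fun x : (_root_.starGraph n).edgeSet => osum x.1) h
            simp only [osum_edg] at this
            rw [this]
          · exact ⟨0, Sym2.mem_mk_left 0 i, Sym2.mem_mk_left 0 j⟩
  · -- upper bound
    intro k hk
    by_contra hlt
    push_neg at hlt
    obtain ⟨c, hprop, hdom⟩ := hk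
    choose v hv1 hv2 using hdom
    -- dominant vertices are the center or edges
    have claimA : ∀ i : Fin k, ∀ a : Fin (n+1), v i = Sum.inl a → a = 0 := by
      intro i a hva
      by_contra ha
      -- the leaf a has only two neighbors
      have hnbr : ∀ w, (totalGraph (_root_.starGraph n)).Adj (Sum.inl a) w →
          w ∈ ({Sum.inl 0, Sum.inr (edg a ha)} : Finset (Fin (n+1) ⊕ (_root_.starGraph n).edgeSet)) := by
        rintro (b | e) hadj
        · obtain ⟨hne, hor⟩ := (star_adj).mp hadj
          rcases hor with rfl | rfl
          · exact absurd rfl ha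
          · simp
        · have hmem : a ∈ (e : Sym2 (Fin (n+1))) := hadj
          obtain ⟨hos, hrep⟩ := edge_rep e.2
          rw [hrep, Sym2.mem_iff] at hmem
          rcases hmem with rfl | rfl
          · exact absurd rfl ha
          · simp only [Finset.mem_insert, Finset.mem_singleton]
            right
            congr 1
            exact Subtype.ext hrep
      choose u hu1 hu2 using hv2 i
      rw [hva] at hu1
      set N : Finset (Fin (n+1) ⊕ (_root_.starGraph n).edgeSet) :=
        {Sum.inl 0, Sum.inr (edg a ha)} with hN
      have hcard : (Finset.univ.erase i).card ≤ N.card := by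
        apply Finset.card_le_card_of_injOn (fun j => if h : j ≠ i then u j h else v i)
        · intro j hj
          have hj' : j ≠ i := Finset.ne_of_mem_erase hj
          beta_reduce
          rw [dif_pos hj']
          exact hnbr _ (hu1 j hj')
        · intro j hj j' hj' heq
          have h1' : j ≠ i := by simpa using hj
          have h2' : j' ≠ i := by simpa using hj'
          simp only [dif_pos h1', dif_pos h2'] at heq
          rw [← hu2 j h1', ← hu2 j' h2', heq]
      have hN2 : N.card ≤ 2 := by
        apply le_trans (Finset.card_insert_le _ _)
        simp
      have hke : (Finset.univ.erase i).card = k - 1 := by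
        rw [Finset.card_erase_of_mem (Finset.mem_univ i), Finset.card_univ, Fintype.card_fin]
      omega
    -- injection into Fin (n+1)
    have hinjF : Function.Injective
        (fun i : Fin k => Sum.elim id (fun e : (_root_.starGraph n).edgeSet => osum e.1) (v i)) := by
      intro i j h
      have key : v i = v j → i = j := by
        intro hv
        rw [← hv1 i, hv, hv1 j]
      rcases hva : v i with a | e <;> rcases hvb : v j with b | f <;>
        simp only [hva, hvb, Sum.elim_inl, Sum.elim_inr, id] at h
      · apply key; rw [hva, hvb, h]
      · have ha0 : a = 0 := claimA i a hva
        have hf0 : osum (f : (_root_.starGraph n).edgeSet).1 ≠ 0 := (edge_rep f.2).1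
        exact absurd (by rw [← h]; exact ha0) hf0
      · have hb0 : b = 0 := claimA j b hvb
        have he0 : osum (e : (_root_.starGraph n).edgeSet).1 ≠ 0 := (edge_rep e.2).1
        exact absurd (by rw [h]; exact hb0) he0
      · apply key; rw [hva, hvb, edge_inj h]
    have := Fintype.card_le_of_injective _ hinjF
    simp only [Fintype.card_fin] at this
    omega
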